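/- A normal-form McNaughton function φ(x) = min_{i∈I} max_{j∈Jᵢ} ρ(aᵢⱼ·x + bᵢⱼ) on [0,1]ⁿ is locally homogeneous in zero if and only if φ(0) = 0. -/

import Mathlib

/-- The truncation function `ρ(y) = max(0, min(1, y))`. -/
noncomputable def rho (y : ℝ) : ℝ := max 0 (min 1 y)

/-- The unit hypercube `[0,1]ⁿ` inside `ℝⁿ`. -/
def unitCube (n : ℕ) : Set (Fin n → ℝ) := {x | ∀ t, x t ∈ Set.Icc (0 : ℝ) 1}

/-- The normal-form McNaughton function
`φ(x) = min_i max_j ρ(aᵢⱼ·x + bᵢⱼ)` with integer data `a`, `b`. -/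
noncomputable def mcN (n k : ℕ) (m : Fin (k + 1) → ℕ)
    (a : (i : Fin (k + 1)) → Fin (m i + 1) → Fin n → ℤ)
    (b : (i : Fin (k + 1)) → Fin (m i + 1) → ℤ) (x : Fin n → ℝ) : ℝ :=
  Finset.univ.inf' Finset.univ_nonempty fun i =>
    Finset.univ.sup' Finset.univ_nonempty fun j =>
      rho ((∑ t, (a i j t : ℝ) * x t) + (b i j : ℝ))

/-- The zeroset of a normal-form McNaughton function on `[0,1]ⁿ`. -/
def zset (n k : ℕ) (m : Fin (k + 1) → ℕ)
    (a : (i : Fin (k + 1)) → Fin (m i + 1) → Fin n → ℤ)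
    (b : (i : Fin (k + 1)) → Fin (m i + 1) → ℤ) : Set (Fin n → ℝ) :=
  {x ∈ unitCube n | mcN n k m a b x = 0}

/-- `φ` is locally homogeneous in zero: there is a neighborhood `U` of `0`
in `[0,1]ⁿ` such that `φ(N·x) = N·φ(x)` whenever `x ∈ U` and `N·x ∈ U`. -/
def LocHomZero (n : ℕ) (φ : (Fin n → ℝ) → ℝ) : Prop :=
  ∃ U : Set (Fin n → ℝ), U ⊆ unitCube n ∧ U ∈ nhdsWithin 0 (unitCube n) ∧
    ∀ (N : ℕ) (x : Fin n → ℝ), x ∈ U → (fun t => (N : ℝ) * x t) ∈ U →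
      φ (fun t => (N : ℝ) * x t) = (N : ℝ) * φ x

lemma rho_nonneg (y : ℝ) : 0 ≤ rho y := le_max_left _ _

lemma rho_of_nonpos {y : ℝ} (h : y ≤ 0) : rho y = 0 := by
  unfold rho
  rw [max_eq_left]
  exact (min_le_right _ _).trans h

lemma rho_of_le_one {y : ℝ} (h : y ≤ 1) : rho y = max 0 y := by
  unfold rho
  rw [min_eq_right h]

lemma le_rho {y : ℝ} : min 1 y ≤ rho y := le_max_right _ _

lemma rho_eq_zero_iff {y : ℝ} : rho y = 0 ↔ y ≤ 0 := by
  constructor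
  · intro h
    by_contra hy
    push_neg at hy
    have h1 : 0 < min 1 y := lt_min one_pos hy
    have := le_rho (y := y)
    rw [h] at this
    linarith
  · exact rho_of_nonpos

/-- A normal-form McNaughton function is locally homogeneous in zero iff `φ(0) = 0`. -/
theorem stmt16 (n k : ℕ) (m : Fin (k + 1) → ℕ)
    (a : (i : Fin (k + 1)) → Fin (m i + 1) → Fin n → ℤ)
    (b : (i : Fin (k + 1)) → Fin (m i + 1) → ℤ) :
    LocHomZero n (mcN n k m a b) ↔ mcN n k m a b (fun _ => 0) = 0 := by
  constructor
  · rintro ⟨U, hUsub, hUnhds, hU⟩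
    have h0cube : (0 : Fin n → ℝ) ∈ unitCube n := fun t => ⟨le_refl 0, zero_le_one⟩
    have h0U : (fun _ : Fin n => (0:ℝ)) ∈ U := mem_of_mem_nhdsWithin h0cube hUnhds
    have h2 := hU 2 (fun _ => 0) h0U (by simpa using h0U)
    simp only [mul_zero, Nat.cast_ofNat] at h2
    linarith
  · intro h0
    classical
    -- simplify the hypothesis
    simp only [mcN, mul_zero, Finset.sum_const_zero, zero_add] at h0
    obtain ⟨i0, -, hi0⟩ := Finset.exists_mem_eq_inf' (Finset.univ_nonempty)
      (fun i : Fin (k+1) => Finset.univ.sup' Finset.univ_nonempty fun j => rho ((b i j : ℝ)))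
    rw [h0] at hi0
    have hb0 : ∀ j, b i0 j ≤ 0 := by
      intro j
      have h1 : rho ((b i0 j : ℝ)) ≤ 0 := by
        rw [hi0]
        exact Finset.le_sup' (fun j => rho ((b i0 j : ℝ))) (Finset.mem_univ j)
      have h2 : rho ((b i0 j : ℝ)) = 0 := le_antisymm h1 (rho_nonneg _)
      have := rho_eq_zero_iff.1 h2
      exact_mod_cast this
    set Good : Fin (k+1) → Prop := fun i => ∀ j, b i j ≤ 0 with hGood
    -- uniform bound on coefficients
    obtain ⟨A, hA⟩ := Finite.exists_le
      (fun p : Σ i : Fin (k+1), Fin (m i + 1) => ∑ t, |(a p.1 p.2 t : ℝ)|)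
    set B : ℝ := max A 0 with hB
    have hBnn : 0 ≤ B := le_max_right _ _
    set ε : ℝ := 1 / (4 * (B + 1)) with hε
    have hεpos : 0 < ε := by positivity
    -- the neighborhood
    set U : Set (Fin n → ℝ) := Metric.ball 0 ε ∩ unitCube n with hUdef
    have hkey : ∀ x ∈ Metric.ball (0 : Fin n → ℝ) ε, ∀ i j,
        |∑ t, (a i j t : ℝ) * x t| ≤ 1/4 := by
      intro x hx i j
      have hxt : ∀ t, |x t| ≤ ε := by
        intro t
        have h1 : dist (x t) ((0 : Fin n → ℝ) t) ≤ dist x 0 := dist_le_pi_dist x 0 t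
        have h2 : dist x (0 : Fin n → ℝ) < ε := Metric.mem_ball.1 hx
        have : dist (x t) 0 ≤ ε := by
          simpa using h1.trans h2.le
        simpa [Real.dist_eq] using this
      calc |∑ t, (a i j t : ℝ) * x t| ≤ ∑ t, |(a i j t : ℝ) * x t| :=
            Finset.abs_sum_le_sum_abs _ _
        _ ≤ ∑ t, |(a i j t : ℝ)| * ε := by
            apply Finset.sum_le_sum
            intro t _
            rw [abs_mul]
            exact mul_le_mul_of_nonneg_left (hxt t) (abs_nonneg _)
        _ = (∑ t, |(a i j t : ℝ)|) * ε := by rw [Finset.sum_mul]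
        _ ≤ (B + 1) * ε := by
            apply mul_le_mul_of_nonneg_right _ hεpos.le
            have := hA ⟨i, j⟩
            have hAB : A ≤ B := le_max_left _ _
            simp only at this
            linarith
        _ = 1/4 := by
            rw [hε]
            field_simp
    -- the key representation lemma
    have hGne : ((Finset.univ : Finset (Fin (k+1))).filter Good).Nonempty :=
      ⟨i0, by simp [hGood, hb0]⟩
    have key : ∀ x ∈ U, mcN n k m a b x =
        ((Finset.univ : Finset (Fin (k+1))).filter Good).inf' hGne
          (fun i => Finset.univ.sup' Finset.univ_nonempty
            (fun j => if b i j = 0 then max 0 (∑ t, (a i j t : ℝ) * x t) else 0)) := by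
      intro x hx
      have hℓ : ∀ i j, |∑ t, (a i j t : ℝ) * x t| ≤ 1/4 := hkey x hx.1
      set F : Fin (k+1) → ℝ := fun i => Finset.univ.sup' Finset.univ_nonempty
        (fun j => rho ((∑ t, (a i j t : ℝ) * x t) + (b i j : ℝ))) with hF
      set G : Fin (k+1) → ℝ := fun i => Finset.univ.sup' Finset.univ_nonempty
        (fun j => if b i j = 0 then max 0 (∑ t, (a i j t : ℝ) * x t) else 0) with hG
      have step1 : ∀ i, Good i → F i = G i := by
        intro i hi
        simp only [hF, hG]
        apply Finset.sup'_congr _ rfl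
        intro j _
        by_cases hbj : b i j = 0
        · have h1 : (∑ t, (a i j t : ℝ) * x t) + (b i j : ℝ) ≤ 1 := by
            have := (abs_le.1 (hℓ i j)).2
            rw [hbj]
            push_cast
            linarith
          rw [rho_of_le_one h1, if_pos hbj, hbj]
          push_cast
          rw [add_zero]
        · have hble : b i j ≤ -1 := by
            have := hi j
            omega
          have hble' : (b i j : ℝ) ≤ -1 := by exact_mod_cast hble
          have h1 : (∑ t, (a i j t : ℝ) * x t) + (b i j : ℝ) ≤ 0 := by
            have := (abs_le.1 (hℓ i j)).2
            linarith
          rw [rho_of_nonpos h1, if_neg hbj]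
      have step2 : ∀ i, Good i → G i ≤ 1/4 := by
        intro i _
        simp only [hG]
        apply Finset.sup'_le
        intro j _
        by_cases hbj : b i j = 0
        · rw [if_pos hbj]
          apply max_le (by norm_num)
          exact (abs_le.1 (hℓ i j)).2
        · rw [if_neg hbj]; norm_num
      have step3 : ∀ i, ¬ Good i → 3/4 ≤ F i := by
        intro i hi
        obtain ⟨j, hj⟩ := not_forall.1 hi
        push_neg at hj
        have hj1 : (1 : ℤ) ≤ b i j := by omega
        have hj1' : (1 : ℝ) ≤ (b i j : ℝ) := by exact_mod_cast hj1
        have h1 : (3:ℝ)/4 ≤ (∑ t, (a i j t : ℝ) * x t) + (b i j : ℝ) := by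
          have := (abs_le.1 (hℓ i j)).1
          linarith
        have h2 : (3:ℝ)/4 ≤ rho ((∑ t, (a i j t : ℝ) * x t) + (b i j : ℝ)) := by
          refine le_trans ?_ le_rho
          rw [le_min_iff]
          constructor <;> linarith
        refine h2.trans ?_
        simp only [hF]
        exact Finset.le_sup'
          (fun j => rho ((∑ t, (a i j t : ℝ) * x t) + (b i j : ℝ))) (Finset.mem_univ j)
      -- now mcN x = inf' over all = inf' over good
      have hmcN : mcN n k m a b x = Finset.univ.inf' Finset.univ_nonempty F := rfl
      rw [hmcN]
      apply le_antisymm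
      · rw [Finset.le_inf'_iff]
        intro i hi
        rw [Finset.mem_filter] at hi
        rw [← step1 i hi.2]
        exact Finset.inf'_le F (Finset.mem_univ i)
      · rw [Finset.le_inf'_iff]
        intro i _
        by_cases hi : Good i
        · rw [step1 i hi]
          exact Finset.inf'_le G (Finset.mem_filter.2 ⟨Finset.mem_univ i, hi⟩)
        · have h1 : ((Finset.univ : Finset (Fin (k+1))).filter Good).inf' hGne G ≤ G i0 :=
            Finset.inf'_le G (by simp [hGood, hb0])
          refine h1.trans ?_
          have h2 := step2 i0 hb0
          have h3 := step3 i hi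
          linarith
    -- conclude
    refine ⟨U, Set.inter_subset_right, ?_, ?_⟩
    · exact Filter.inter_mem (mem_nhdsWithin_of_mem_nhds (Metric.ball_mem_nhds _ hεpos))
        self_mem_nhdsWithin
    · intro N x hx hNx
      rw [key x hx, key _ hNx]
      have hNnn : (0:ℝ) ≤ (N : ℝ) := Nat.cast_nonneg N
      rw [Finset.apply_inf'_eq_inf'_comp hGne (fun y => (N:ℝ) * y)
        (fun y z => mul_min_of_nonneg y z hNnn)]
      apply Finset.inf'_congr hGne rfl
      intro i _
      simp only [Function.comp_apply]
      rw [Finset.comp_sup'_eq_sup'_comp Finset.univ_nonempty (fun y => (N:ℝ) * y)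
        (fun y z => mul_max_of_nonneg y z hNnn)]
      apply Finset.sup'_congr Finset.univ_nonempty rfl
      intro j _
      simp only [Function.comp_apply]
      by_cases hbj : b i j = 0
      · rw [if_pos hbj, if_pos hbj, mul_max_of_nonneg _ _ hNnn, mul_zero]
        congr 1
        rw [Finset.mul_sum]
        apply Finset.sum_congr rfl
        intro t _
        ring
      · rw [if_neg hbj, if_neg hbj, mul_zero]
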